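/- Let φ : [0,2] → ℝ be twice continuously differentiable and let k ∈ (0,2) be such that φ''(t) < 0 for t ∈ [0,k) and φ''(t) > 0 for t ∈ (k,2]. Let β ∈ (0,1) satisfy φ(2β) − φ(β) = β·φ'(β). Then for every x ∈ [0,β] and every ξ ∈ [β,1], φ(ξ + β) − x·φ'(β) − φ(β + ξ − x) ≥ 0. -/

import Mathlib

open Set

theorem stmt14 (φ φ' φ'' : ℝ → ℝ)
    (hd1 : ∀ t ∈ Icc (0:ℝ) 2, HasDerivWithinAt φ (φ' t) (Icc 0 2) t)
    (hd2 : ∀ t ∈ Icc (0:ℝ) 2, HasDerivWithinAt φ' (φ'' t) (Icc 0 2) t)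
    (hc : ContinuousOn φ'' (Icc (0:ℝ) 2))
    (k : ℝ) (hk : k ∈ Ioo (0:ℝ) 2)
    (hconc : ∀ t ∈ Ico (0:ℝ) k, φ'' t < 0)
    (hconv : ∀ t ∈ Ioc k 2, 0 < φ'' t)
    (β : ℝ) (hβ : β ∈ Ioo (0:ℝ) 1)
    (hβeq : φ (2 * β) - φ β = β * φ' β)
    : ∀ x ∈ Icc (0:ℝ) β, ∀ ξ ∈ Icc β 1,
      0 ≤ φ (ξ + β) - x * φ' β - φ (β + ξ - x) := by
  obtain ⟨hk0, hk2⟩ := hk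
  obtain ⟨hβ0, hβ1⟩ := hβ
  have hφc : ContinuousOn φ (Icc (0:ℝ) 2) := fun t ht => (hd1 t ht).continuousWithinAt
  have hφ'c : ContinuousOn φ' (Icc (0:ℝ) 2) := fun t ht => (hd2 t ht).continuousWithinAt
  have hD1 : ∀ t ∈ Ioo (0:ℝ) 2, HasDerivAt φ (φ' t) t := fun t ht =>
    (hd1 t (Ioo_subset_Icc_self ht)).hasDerivAt (Icc_mem_nhds ht.1 ht.2)
  have hD2 : ∀ t ∈ Ioo (0:ℝ) 2, HasDerivAt φ' (φ'' t) t := fun t ht =>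
    (hd2 t (Ioo_subset_Icc_self ht)).hasDerivAt (Icc_mem_nhds ht.1 ht.2)
  set c := φ' β with hcdef
  set h : ℝ → ℝ := fun t => φ t - t * c with hhdef
  have hhc : ContinuousOn h (Icc (0:ℝ) 2) :=
    hφc.sub (continuousOn_id.mul continuousOn_const)
  have hDh : ∀ t ∈ Ioo (0:ℝ) 2, HasDerivAt h (φ' t - c) t := fun t ht => by
    exact (by simpa using (hD1 t ht).sub ((hasDerivAt_id t).mul_const c) : HasDerivAt (φ - fun y => y * c) (φ' t - c) t)
  -- h (2β) = h β
  have hheq : h (2 * β) = h β := by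
    simp only [hhdef]
    have : (2 * β) * c = 2 * (β * c) := by ring
    rw [this]
    have hβc : β * c = φ (2 * β) - φ β := hβeq.symm
    linarith
  -- main claim: for all a b with β ≤ a, a ≤ b, b ≤ β + 1, h a ≤ h b is NOT what we need;
  -- we need: for t ∈ [ξ, β+ξ], h t ≤ h (β+ξ).
  -- key monotonicity facts
  have key : ∀ t ∈ Icc β 2, ∀ s ∈ Icc β 2, t ≤ s → 2 * β ≤ s → h t ≤ h s := by
    by_cases hcase : k ≤ β
    · -- φ' nondecreasing on [β,2], so h nondecreasing on [β,2]
      have hmono' : MonotoneOn φ' (Icc β 2) := by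
        apply monotoneOn_of_deriv_nonneg (convex_Icc _ _)
          (hφ'c.mono (Icc_subset_Icc (le_of_lt hβ0) le_rfl))
        · intro t ht
          rw [interior_Icc] at ht
          exact ((hD2 t ⟨lt_trans hβ0 ht.1, ht.2⟩).differentiableAt).differentiableWithinAt
        · intro t ht
          rw [interior_Icc] at ht
          rw [(hD2 t ⟨lt_trans hβ0 ht.1, ht.2⟩).deriv]
          exact le_of_lt (hconv t ⟨lt_of_le_of_lt hcase ht.1, le_of_lt ht.2⟩)
      have hmono : MonotoneOn h (Icc β 2) := by
        apply monotoneOn_of_deriv_nonneg (convex_Icc _ _)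
          (hhc.mono (Icc_subset_Icc (le_of_lt hβ0) le_rfl))
        · intro t ht
          rw [interior_Icc] at ht
          exact ((hDh t ⟨lt_trans hβ0 ht.1, ht.2⟩).differentiableAt).differentiableWithinAt
        · intro t ht
          rw [interior_Icc] at ht
          rw [(hDh t ⟨lt_trans hβ0 ht.1, ht.2⟩).deriv]
          have := hmono' (left_mem_Icc.mpr (by linarith)) ⟨le_of_lt ht.1, le_of_lt ht.2⟩ (le_of_lt ht.1)
          linarith
      intro t ht s hs hts _
      exact hmono ht hs hts
    · push_neg at hcase
      -- φ' strictly decreasing on [β,k]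
      have hanti' : StrictAntiOn φ' (Icc β k) := by
        apply strictAntiOn_of_deriv_neg (convex_Icc _ _)
          (hφ'c.mono (Icc_subset_Icc (le_of_lt hβ0) (le_of_lt hk2)))
        intro t ht
        rw [interior_Icc] at ht
        rw [(hD2 t ⟨lt_trans hβ0 ht.1, lt_trans ht.2 hk2⟩).deriv]
        exact hconc t ⟨le_of_lt (lt_trans hβ0 ht.1), ht.2⟩
      -- φ' nondecreasing on [k,2]
      have hmono' : MonotoneOn φ' (Icc k 2) := by
        apply monotoneOn_of_deriv_nonneg (convex_Icc _ _)
          (hφ'c.mono (Icc_subset_Icc (le_of_lt hk0) le_rfl))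
        · intro t ht
          rw [interior_Icc] at ht
          exact ((hD2 t ⟨lt_trans hk0 ht.1, ht.2⟩).differentiableAt).differentiableWithinAt
        · intro t ht
          rw [interior_Icc] at ht
          rw [(hD2 t ⟨lt_trans hk0 ht.1, ht.2⟩).deriv]
          exact le_of_lt (hconv t ⟨ht.1, le_of_lt ht.2⟩)
      -- h strictly decreasing on [β,k]
      have hAk : StrictAntiOn h (Icc β k) := by
        apply strictAntiOn_of_deriv_neg (convex_Icc _ _)
          (hhc.mono (Icc_subset_Icc (le_of_lt hβ0) (le_of_lt hk2)))
        intro t ht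
        rw [interior_Icc] at ht
        rw [(hDh t ⟨lt_trans hβ0 ht.1, lt_trans ht.2 hk2⟩).deriv]
        have := hanti' (left_mem_Icc.mpr (le_of_lt hcase)) ⟨le_of_lt ht.1, le_of_lt ht.2⟩ ht.1
        linarith
      -- k < 2β
      have hk2β : k < 2 * β := by
        by_contra hcon
        push_neg at hcon
        have := hAk (left_mem_Icc.mpr (le_of_lt hcase)) ⟨by linarith, hcon⟩ (by linarith)
        linarith [hheq]
      -- the split point m
      set S : Set ℝ := {t | t ∈ Icc k 2 ∧ φ' t ≤ c} with hSdef
      have hkS : k ∈ S := by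
        refine ⟨⟨le_rfl, le_of_lt hk2⟩, ?_⟩
        exact le_of_lt (hanti' (left_mem_Icc.mpr (le_of_lt hcase))
          (right_mem_Icc.mpr (le_of_lt hcase)) hcase)
      have hSne : S.Nonempty := ⟨k, hkS⟩
      have hSbdd : BddAbove S := ⟨2, fun t ht => ht.1.2⟩
      set m : ℝ := sSup S with hmdef
      have hkm : k ≤ m := le_csSup hSbdd hkS
      have hm2 : m ≤ 2 := csSup_le hSne fun t ht => ht.1.2
      have hm_le : ∀ t, k ≤ t → t < m → φ' t ≤ c := by
        intro t htk htm
        obtain ⟨s, hsS, hts⟩ := exists_lt_of_lt_csSup hSne htm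
        calc φ' t ≤ φ' s := hmono' ⟨htk, le_trans (le_of_lt hts) hsS.1.2⟩ hsS.1 (le_of_lt hts)
          _ ≤ c := hsS.2
      have hm_ge : ∀ t, m < t → t ≤ 2 → c ≤ φ' t := by
        intro t hmt ht2
        by_contra hcon
        push_neg at hcon
        have : t ∈ S := ⟨⟨le_trans hkm (le_of_lt hmt), ht2⟩, le_of_lt hcon⟩
        exact absurd (le_csSup hSbdd this) (not_le.mpr hmt)
      -- h antitone on [β, m]
      have hAnti : AntitoneOn h (Icc β m) := by
        apply antitoneOn_of_deriv_nonpos (convex_Icc _ _)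
          (hhc.mono (Icc_subset_Icc (le_of_lt hβ0) hm2))
        · intro t ht
          rw [interior_Icc] at ht
          exact ((hDh t ⟨lt_trans hβ0 ht.1, lt_of_lt_of_le ht.2 hm2⟩).differentiableAt).differentiableWithinAt
        · intro t ht
          rw [interior_Icc] at ht
          rw [(hDh t ⟨lt_trans hβ0 ht.1, lt_of_lt_of_le ht.2 hm2⟩).deriv]
          rcases lt_or_ge t k with htk | htk
          · have := hanti' (left_mem_Icc.mpr (le_of_lt hcase))
              ⟨le_of_lt ht.1, le_of_lt htk⟩ ht.1
            linarith
          · linarith [hm_le t htk ht.2]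
      -- h monotone on [m, 2]
      have hMono : MonotoneOn h (Icc m 2) := by
        apply monotoneOn_of_deriv_nonneg (convex_Icc _ _)
          (hhc.mono (Icc_subset_Icc (le_trans (le_of_lt hk0) hkm) le_rfl))
        · intro t ht
          rw [interior_Icc] at ht
          exact ((hDh t ⟨lt_trans hk0 (lt_of_le_of_lt hkm ht.1), ht.2⟩).differentiableAt).differentiableWithinAt
        · intro t ht
          rw [interior_Icc] at ht
          rw [(hDh t ⟨lt_trans hk0 (lt_of_le_of_lt hkm ht.1), ht.2⟩).deriv]
          linarith [hm_ge t ht.1 (le_of_lt ht.2)]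
      -- m ≤ 2β
      have hm2β : m ≤ 2 * β := by
        by_contra hcon
        push_neg at hcon
        have h1 : h (2 * β) ≤ h k := hAnti ⟨le_of_lt hcase, hkm⟩
          ⟨by linarith, le_of_lt hcon⟩ (le_of_lt hk2β)
        have h2 : h k < h β := hAk (left_mem_Icc.mpr (le_of_lt hcase))
          (right_mem_Icc.mpr (le_of_lt hcase)) hcase
        linarith [hheq]
      -- conclude
      intro t ht s hs hts h2βs
      rcases le_or_gt m t with hmt | htm
      · exact hMono ⟨hmt, ht.2⟩ ⟨le_trans hmt hts, hs.2⟩ hts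
      · have h1 : h t ≤ h β := hAnti (left_mem_Icc.mpr (by linarith))
          ⟨ht.1, le_of_lt htm⟩ ht.1
        have h2 : h (2 * β) ≤ h s := hMono ⟨hm2β, by linarith⟩
          ⟨le_trans hm2β h2βs, hs.2⟩ h2βs
        linarith [hheq]
  -- finish
  intro x hx ξ hξ
  obtain ⟨hx0, hxβ⟩ := hx
  obtain ⟨hξβ, hξ1⟩ := hξ
  have ht : β + ξ - x ∈ Icc β 2 := ⟨by linarith, by linarith⟩
  have hs : β + ξ ∈ Icc β 2 := ⟨by linarith, by linarith⟩
  have := key (β + ξ - x) ht (β + ξ) hs (by linarith) (by linarith)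
  simp only [hhdef] at this
  have hξβeq : ξ + β = β + ξ := by ring
  rw [hξβeq]
  have hring : (β + ξ) * c - (β + ξ - x) * c = x * c := by ring
  linarith
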